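/- Let V be an [n,k,d]_q linear code that is (δ, L)-list-decodable, with generator matrix G ∈ F_q^{k×n}. Let S ⊆ F_q^k be a σ-robust set of size N. For z ∈ S, b ∈ F_q, let V_{z,b} = {G^T·ℓ ∈ V : ⟨ℓ, z⟩ = b} (codewords whose message vector ℓ has inner product b with z). Let u, u* ∈ F_q^n and for each z ∈ S let B_z(X) be a linear polynomial. If Pr_{x ∈ F_q, z ∈ S}[Δ(u* + x·u, V_{z,B_z(x)}) < δ] ≥ max(2L·(σ/N + ε)^{1/3}, 4/(ε²q)) for some ε ∈ (0, 1/3), then there exist v, v* ∈ V and C ⊆ [n] with |C| ≥ (1-δ-ε)n, u|_C = v|_C, and u*|_C = v*|_C. -/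

import Mathlib

open Finset Polynomial
open scoped Classical

/-- Relative Hamming distance between two functions on a finite domain. -/
noncomputable def relDist {D F : Type*} [Fintype D] (u v : D → F) : ℝ :=
  ((Finset.univ.filter (fun i => u i ≠ v i)).card : ℝ) / (Fintype.card D)

private lemma relDist_nonneg' {D F : Type*} [Fintype D] (u v : D → F) : 0 ≤ relDist u v := by
  unfold relDist; positivity

/-- weighted double counting -/
private lemma wdc {α β : Type*} (A : Finset α) (B : Finset β) (R : α → β → Prop)
    [∀ a b, Decidable (R a b)] (w : β → ℕ) :
    ∑ a ∈ A, ∑ b ∈ B.filter (fun b => R a b), w b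
      = ∑ b ∈ B, (A.filter (fun a => R a b)).card * w b := by
  classical
  simp only [Finset.sum_filter, Finset.card_filter]
  rw [Finset.sum_comm]
  refine Finset.sum_congr rfl fun b _ => ?_
  rw [Finset.sum_mul]
  refine Finset.sum_congr rfl fun a _ => ?_
  by_cases h : R a b <;> simp [h]

set_option maxHeartbeats 4000000 in
theorem stmt11 {F : Type*} [Field F] [Fintype F] {n k d : ℕ}
    (G : Matrix (Fin k) (Fin n) F)
    (hinj : Function.Injective (fun ℓ : Fin k → F => Matrix.vecMul ℓ G))
    (hdist : ∀ ℓ : Fin k → F, ℓ ≠ 0 →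
      d ≤ (Finset.univ.filter (fun j => Matrix.vecMul ℓ G j ≠ 0)).card)
    (δ ε L : ℝ) (hε : 0 < ε) (hε3 : ε < 1/3)
    (hLD : ∀ w : Fin n → F,
      (({ℓ : Fin k → F | relDist w (Matrix.vecMul ℓ G) < δ}).ncard : ℝ) ≤ L)
    (σ N : ℕ) (S : Finset (Fin k → F)) (hN : S.card = N)
    (hrobust : ∀ T : Finset (Fin k → F), T ⊆ S → T.card = σ →
      Submodule.span F (T : Set (Fin k → F)) = ⊤)
    (u ustar : Fin n → F) (B : (Fin k → F) → Polynomial F) (hB : ∀ z, (B z).degree ≤ 1)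
    (hpr : max (2 * L * ((σ / N : ℝ) + ε) ^ ((1:ℝ)/3)) (4 / (ε ^ 2 * Fintype.card F))
      ≤ (({p : F × ↥S | ∃ ℓ : Fin k → F,
            (∑ i, ℓ i * (p.2 : Fin k → F) i) = (B (p.2 : Fin k → F)).eval p.1 ∧
            relDist (fun j => ustar j + p.1 * u j) (Matrix.vecMul ℓ G) < δ}).ncard : ℝ)
          / ((Fintype.card F : ℝ) * N)) :
    ∃ ℓ ℓstar : Fin k → F, ∃ C : Finset (Fin n),
      ((1 - δ - ε) * n ≤ (C.card : ℝ)) ∧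
      (∀ j ∈ C, u j = Matrix.vecMul ℓ G j) ∧
      (∀ j ∈ C, ustar j = Matrix.vecMul ℓstar G j) := by
  classical
  -- trivial case
  by_cases htriv : (1 - δ - ε) * (n:ℝ) ≤ 0
  · exact ⟨0, 0, ∅, by simpa using htriv, fun j hj => absurd hj (by simp),
      fun j hj => absurd hj (by simp)⟩
  push_neg at htriv
  have hn0 : 0 < (n:ℝ) := by
    rcases Nat.eq_zero_or_pos n with h | h
    · rw [h] at htriv; norm_num at htriv
    · exact_mod_cast h
  have hde1 : δ + ε < 1 := by nlinarith
  set q : ℕ := Fintype.card F with hqdef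
  have hq1 : (1:ℕ) < q := Fintype.one_lt_card
  clear_value q
  have hqR : (0:ℝ) < q := by exact_mod_cast Nat.lt_of_lt_of_le Nat.zero_lt_one hq1.le
  -- the good-pair finset
  set GP : Finset (F × ↥S) :=
    Finset.univ.filter (fun p : F × ↥S => ∃ ℓ : Fin k → F,
      (∑ i, ℓ i * (p.2 : Fin k → F) i) = (B (p.2 : Fin k → F)).eval p.1 ∧
      relDist (fun j => ustar j + p.1 * u j) (Matrix.vecMul ℓ G) < δ) with hGPdef
  have hMcard : ({p : F × ↥S | ∃ ℓ : Fin k → F,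
            (∑ i, ℓ i * (p.2 : Fin k → F) i) = (B (p.2 : Fin k → F)).eval p.1 ∧
            relDist (fun j => ustar j + p.1 * u j) (Matrix.vecMul ℓ G) < δ}).ncard = GP.card := by
    rw [show {p : F × ↥S | ∃ ℓ : Fin k → F,
            (∑ i, ℓ i * (p.2 : Fin k → F) i) = (B (p.2 : Fin k → F)).eval p.1 ∧
            relDist (fun j => ustar j + p.1 * u j) (Matrix.vecMul ℓ G) < δ}
        = (GP : Set (F × ↥S)) by ext p; simp [hGPdef], Set.ncard_coe_finset]
  rw [hMcard] at hpr
  clear_value GP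
  set γ : ℝ := ((σ / N : ℝ) + ε) ^ ((1:ℝ)/3) with hγdef
  set P : ℝ := (GP.card : ℝ) / ((q:ℝ) * N) with hPdef
  clear_value γ P
  have hp1 : 2 * L * γ ≤ P := le_trans (le_max_left _ _) hpr
  have hp2 : 4 / (ε ^ 2 * q) ≤ P := le_trans (le_max_right _ _) hpr
  have hN0 : 0 < N := by
    rcases Nat.eq_zero_or_pos N with h | h
    · exfalso
      have hP0 : P = 0 := by rw [hPdef, h]; simp
      have : (0:ℝ) < 4 / (ε ^ 2 * q) := by positivity
      linarith [hp2, hP0.le]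
    · exact h
  have hNR : (0:ℝ) < N := by exact_mod_cast hN0
  have hGPle : GP.card ≤ q * N := by
    rw [hGPdef]
    refine le_trans (Finset.card_filter_le _ _) ?_
    simp [Finset.card_univ, Fintype.card_coe, hN, hqdef]
  have hP1 : P ≤ 1 := by
    rw [hPdef, div_le_one (by positivity)]
    exact_mod_cast hGPle
  have hq4 : 4 / ε ^ 2 ≤ (q:ℝ) := by
    have h := le_trans hp2 hP1
    rw [div_le_one (by positivity)] at h
    rw [div_le_iff₀ (by positivity)]
    nlinarith
  have hP0 : 0 < P := lt_of_lt_of_le (by positivity) hp2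
  have hGP0 : 0 < GP.card := by
    by_contra h
    push_neg at h
    have h0 : GP.card = 0 := Nat.le_zero.mp h
    rw [hPdef, h0] at hP0; simp at hP0
  obtain ⟨p₀, hp₀⟩ := Finset.card_pos.mp hGP0
  rw [hGPdef, Finset.mem_filter] at hp₀
  obtain ⟨-, ℓ₀, hℓ₀c, hℓ₀d⟩ := hp₀
  have hδ0 : 0 < δ := lt_of_le_of_lt (relDist_nonneg' _ _) hℓ₀d
  have hL1 : (1:ℝ) ≤ L := by
    refine le_trans ?_ (hLD (fun j => ustar j + (p₀.1 : F) * u j))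
    have hsub : ({ℓ₀} : Set (Fin k → F)) ⊆
        {ℓ : Fin k → F | relDist (fun j => ustar j + (p₀.1 : F) * u j) (Matrix.vecMul ℓ G) < δ} := by
      intro x hx; rcases hx with rfl; exact hℓ₀d
    have := Set.ncard_le_ncard hsub (Set.toFinite _)
    have h1 : ({ℓ₀} : Set (Fin k → F)).ncard = 1 := Set.ncard_singleton _
    exact_mod_cast h1 ▸ this
  have hγ0 : 0 < γ := by
    rw [hγdef]; exact Real.rpow_pos_of_pos (by positivity) _
  have hγ3 : γ ^ (3:ℕ) = (σ/N : ℝ) + ε := by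
    rw [hγdef, ← Real.rpow_natCast _ 3, ← Real.rpow_mul (by positivity)]
    norm_num
  -- per x data
  set Gx : F → Finset ↥S := fun x => Finset.univ.filter (fun z : ↥S => ∃ ℓ : Fin k → F,
      (∑ i, ℓ i * (z : Fin k → F) i) = (B (z : Fin k → F)).eval x ∧
      relDist (fun j => ustar j + x * u j) (Matrix.vecMul ℓ G) < δ) with hGxdef
  have hMsum : GP.card = ∑ x : F, (Gx x).card := by
    rw [hGPdef, hGxdef]
    rw [Finset.card_filter, Fintype.sum_prod_type]
    refine Finset.sum_congr rfl fun x _ => ?_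
    rw [Finset.card_filter]
  have hGxN : ∀ x, (Gx x).card ≤ N := by
    intro x
    simp only [hGxdef]
    refine le_trans (Finset.card_filter_le _ _) ?_
    simp [Finset.card_univ, Fintype.card_coe, hN]
  clear_value Gx
  set X : Finset F := Finset.univ.filter (fun x => L * γ * (N:ℝ) ≤ ((Gx x).card : ℝ)) with hXdef
  clear_value X
  have hL0 : (0:ℝ) ≤ L := le_trans zero_le_one hL1
  have hLγN : (0:ℝ) ≤ L * γ * N := mul_nonneg (mul_nonneg hL0 hγ0.le) hNR.le
  have hXc : 2 / ε ^ 2 ≤ (X.card : ℝ) := by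
    have hsum : (GP.card : ℝ) = ∑ x : F, ((Gx x).card : ℝ) := by
      rw [hMsum]; push_cast; rfl
    have h1 : ∑ x ∈ X, ((Gx x).card:ℝ) ≤ (X.card:ℝ) * N := by
      calc ∑ x ∈ X, ((Gx x).card:ℝ) ≤ ∑ _x ∈ X, (N:ℝ) :=
        Finset.sum_le_sum (fun x _ => by exact_mod_cast hGxN x)
      _ = (X.card:ℝ) * N := by rw [Finset.sum_const, nsmul_eq_mul]
    have h2 : ∑ x ∈ Finset.univ.filter (fun x => ¬ (L * γ * (N:ℝ) ≤ ((Gx x).card : ℝ))),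
        ((Gx x).card:ℝ) ≤ (q:ℝ) * (L * γ * N) := by
      calc ∑ x ∈ Finset.univ.filter (fun x => ¬ (L * γ * (N:ℝ) ≤ ((Gx x).card : ℝ))), ((Gx x).card:ℝ)
          ≤ ∑ _x ∈ Finset.univ.filter (fun x => ¬ (L * γ * (N:ℝ) ≤ ((Gx x).card : ℝ))), (L*γ*(N:ℝ)) :=
        Finset.sum_le_sum (fun x hx => (lt_of_not_ge (Finset.mem_filter.mp hx).2).le)
      _ = ((Finset.univ.filter (fun x => ¬ (L * γ * (N:ℝ) ≤ ((Gx x).card : ℝ)))).card : ℝ) * (L*γ*N) := by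
          rw [Finset.sum_const, nsmul_eq_mul]
      _ ≤ (q:ℝ) * (L*γ*N) := by
          have hc : (Finset.univ.filter (fun x => ¬ (L * γ * (N:ℝ) ≤ ((Gx x).card : ℝ)))).card ≤ q := by
            calc (Finset.univ.filter (fun x => ¬ (L * γ * (N:ℝ) ≤ ((Gx x).card : ℝ)))).card
                ≤ (Finset.univ : Finset F).card := Finset.card_filter_le _ _
            _ = q := by simp [hqdef]
          exact mul_le_mul_of_nonneg_right (by exact_mod_cast hc) hLγN
    have hsplit : (GP.card : ℝ) ≤ (X.card:ℝ) * N + (q:ℝ) * (L*γ*N) := by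
      rw [hsum, ← Finset.sum_filter_add_sum_filter_not Finset.univ
        (fun x => L * γ * (N:ℝ) ≤ ((Gx x).card : ℝ)) (fun x => ((Gx x).card : ℝ))]
      rw [← hXdef]
      exact add_le_add h1 h2
    have hPeq : (GP.card : ℝ) = P * ((q:ℝ) * N) := by
      rw [hPdef]; field_simp
    have hLγ2 : L * γ ≤ P / 2 := by nlinarith
    have hXN : (P/2) * ((q:ℝ)) * N ≤ (X.card:ℝ) * N := by
      nlinarith [mul_le_mul_of_nonneg_left hLγ2 (by positivity : (0:ℝ) ≤ (q:ℝ)*N)]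
    have hX1 : (P/2) * (q:ℝ) ≤ (X.card:ℝ) := le_of_mul_le_mul_right (by linarith) hNR
    have h4 : 2/ε^2 ≤ (P/2) * q := by
      have hh := mul_le_mul_of_nonneg_right hp2 (by positivity : (0:ℝ) ≤ (q:ℝ)/2)
      calc 2/ε^2 = (4/(ε^2*(q:ℝ))) * ((q:ℝ)/2) := by field_simp; ring
      _ ≤ P * ((q:ℝ)/2) := hh
      _ = (P/2) * q := by ring
    linarith
  -- choice of list elements
  set Zf : F → (Fin k → F) → Finset ↥S := fun x ℓ => Finset.univ.filter
      (fun z : ↥S => (∑ i, ℓ i * (z : Fin k → F) i) = (B (z : Fin k → F)).eval x) with hZfdef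
  have hchoice : ∀ x : F, ∃ ℓ : Fin k → F, x ∈ X →
      (relDist (fun j => ustar j + x * u j) (Matrix.vecMul ℓ G) < δ ∧
        γ * N ≤ ((Zf x ℓ).card : ℝ)) := by
    intro x
    by_cases hx : x ∈ X
    swap
    · exact ⟨0, fun h => absurd h hx⟩
    have hGxc : L * γ * (N:ℝ) ≤ ((Gx x).card : ℝ) := by
      rw [hXdef] at hx; exact (Finset.mem_filter.mp hx).2
    by_contra hcon
    push_neg at hcon
    set Lst : Finset (Fin k → F) := Finset.univ.filter
      (fun ℓ => relDist (fun j => ustar j + x * u j) (Matrix.vecMul ℓ G) < δ) with hLstdef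
    have hLstL : ((Lst).card : ℝ) ≤ L := by
      have h := hLD (fun j => ustar j + x * u j)
      have he : {ℓ : Fin k → F | relDist (fun j => ustar j + x * u j) (Matrix.vecMul ℓ G) < δ}
          = (Lst : Set (Fin k → F)) := by ext ℓ; simp [hLstdef]
      rwa [he, Set.ncard_coe_finset] at h
    have hcover : Gx x ⊆ Lst.biUnion (fun ℓ => Zf x ℓ) := by
      intro z hz
      simp only [hGxdef, Finset.mem_filter, Finset.mem_univ, true_and] at hz
      obtain ⟨ℓ, h1, h2⟩ := hz
      refine Finset.mem_biUnion.mpr ⟨ℓ, ?_, ?_⟩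
      · simp only [hLstdef, Finset.mem_filter, Finset.mem_univ, true_and]; exact h2
      · simp only [hZfdef, Finset.mem_filter, Finset.mem_univ, true_and]; exact h1
    have hcard : ((Gx x).card : ℝ) ≤ ∑ ℓ ∈ Lst, ((Zf x ℓ).card : ℝ) := by
      have h := (Finset.card_le_card hcover).trans Finset.card_biUnion_le
      exact_mod_cast h
    rcases Finset.eq_empty_or_nonempty Lst with he | hne
    · rw [he, Finset.sum_empty] at hcard
      nlinarith [mul_pos (mul_pos (lt_of_lt_of_le zero_lt_one hL1) hγ0) hNR]
    · have hlt : ∑ ℓ ∈ Lst, ((Zf x ℓ).card:ℝ) < ∑ _ℓ ∈ Lst, γ*(N:ℝ) := by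
        refine Finset.sum_lt_sum_of_nonempty hne fun ℓ hℓ => ?_
        refine (hcon ℓ).2 ?_
        have := (Finset.mem_filter.mp (hLstdef ▸ hℓ)).2
        exact this
      rw [Finset.sum_const, nsmul_eq_mul] at hlt
      have hLst' : ((Lst).card:ℝ) * (γ*N) ≤ L * (γ*N) :=
        mul_le_mul_of_nonneg_right hLstL (by positivity)
      nlinarith
  choose ℓof hℓof using hchoice
  set Zx : F → Finset ↥S := fun x => Zf x (ℓof x) with hZxdef
  have hZxN : ∀ x, (Zx x).card ≤ N := by
    intro x
    simp only [hZxdef, hZfdef]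
    refine le_trans (Finset.card_filter_le _ _) ?_
    simp [Finset.card_univ, Fintype.card_coe, hN]
  clear_value Zx
  -- triple counting
  have hNne : (N:ℝ) ≠ 0 := ne_of_gt hNR
  have hpm : ((σ:ℝ) + ε * N) * (X.card:ℝ)^3
      ≤ ∑ x₁ ∈ X, ∑ x₂ ∈ X, ∑ x₃ ∈ X, (((Zx x₁ ∩ Zx x₂) ∩ Zx x₃).card : ℝ) := by
    have hZxγ : ∀ x ∈ X, γ * (N:ℝ) ≤ ((Zx x).card : ℝ) := by
      intro x hx
      have h := (hℓof x hx).2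
      simpa only [hZxdef] using h
    have h1 : ∑ z : ↥S, (X.filter (fun x => z ∈ Zx x)).card = ∑ x ∈ X, (Zx x).card := by
      have h := wdc X (Finset.univ : Finset ↥S) (fun x z => z ∈ Zx x) (fun _ => 1)
      simp only [Finset.sum_const, smul_eq_mul, mul_one] at h
      rw [← h]
      refine Finset.sum_congr rfl fun x _ => ?_
      congr 1
      rw [Finset.filter_mem_eq_inter, Finset.univ_inter]
    have hcsum : γ * (N:ℝ) * (X.card:ℝ) ≤ ∑ z : ↥S, ((X.filter (fun x => z ∈ Zx x)).card : ℝ) := by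
      calc γ * (N:ℝ) * (X.card:ℝ) = ∑ _x ∈ X, γ * (N:ℝ) := by
            rw [Finset.sum_const, nsmul_eq_mul]; ring
      _ ≤ ∑ x ∈ X, ((Zx x).card : ℝ) := Finset.sum_le_sum hZxγ
      _ = ∑ z : ↥S, ((X.filter (fun x => z ∈ Zx x)).card : ℝ) := by exact_mod_cast congrArg (Nat.cast : ℕ → ℝ) h1.symm
    have e1 : ∀ x₁ x₂ : F, ∑ x₃ ∈ X, ((Zx x₁ ∩ Zx x₂) ∩ Zx x₃).card
        = ∑ z ∈ Zx x₁ ∩ Zx x₂, (X.filter (fun x => z ∈ Zx x)).card := by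
      intro x₁ x₂
      have h := wdc X (Zx x₁ ∩ Zx x₂) (fun x₃ z => z ∈ Zx x₃) (fun _ => 1)
      simp only [Finset.sum_const, smul_eq_mul, mul_one] at h
      rw [← h]
      refine Finset.sum_congr rfl fun x₃ _ => ?_
      congr 1
      try rw [Finset.filter_mem_eq_inter]
    have e2 : ∀ x₁ : F, ∑ x₂ ∈ X, ∑ z ∈ Zx x₁ ∩ Zx x₂, (X.filter (fun x => z ∈ Zx x)).card
        = ∑ z ∈ Zx x₁, ((X.filter (fun x => z ∈ Zx x)).card) * ((X.filter (fun x => z ∈ Zx x)).card) := by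
      intro x₁
      have h := wdc X (Zx x₁) (fun x₂ z => z ∈ Zx x₂) (fun z => (X.filter (fun x => z ∈ Zx x)).card)
      rw [← h]
      refine Finset.sum_congr rfl fun x₂ _ => ?_
      congr 1
      try rw [Finset.filter_mem_eq_inter]
    have e3 : ∑ x₁ ∈ X, ∑ z ∈ Zx x₁,
          ((X.filter (fun x => z ∈ Zx x)).card) * ((X.filter (fun x => z ∈ Zx x)).card)
        = ∑ z : ↥S, ((X.filter (fun x => z ∈ Zx x)).card) *
            (((X.filter (fun x => z ∈ Zx x)).card) * ((X.filter (fun x => z ∈ Zx x)).card)) := by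
      have h := wdc X (Finset.univ : Finset ↥S) (fun x₁ z => z ∈ Zx x₁)
        (fun z => ((X.filter (fun x => z ∈ Zx x)).card) * ((X.filter (fun x => z ∈ Zx x)).card))
      rw [← h]
      refine Finset.sum_congr rfl fun x₁ _ => ?_
      congr 1
      try rw [Finset.filter_mem_eq_inter, Finset.univ_inter]
    have hcube : ∑ x₁ ∈ X, ∑ x₂ ∈ X, ∑ x₃ ∈ X, ((Zx x₁ ∩ Zx x₂) ∩ Zx x₃).card
        = ∑ z : ↥S, ((X.filter (fun x => z ∈ Zx x)).card)^3 := by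
      calc ∑ x₁ ∈ X, ∑ x₂ ∈ X, ∑ x₃ ∈ X, ((Zx x₁ ∩ Zx x₂) ∩ Zx x₃).card
          = ∑ x₁ ∈ X, ∑ x₂ ∈ X, ∑ z ∈ Zx x₁ ∩ Zx x₂, (X.filter (fun x => z ∈ Zx x)).card :=
            Finset.sum_congr rfl fun x₁ _ => Finset.sum_congr rfl fun x₂ _ => e1 x₁ x₂
      _ = ∑ x₁ ∈ X, ∑ z ∈ Zx x₁,
            ((X.filter (fun x => z ∈ Zx x)).card) * ((X.filter (fun x => z ∈ Zx x)).card) :=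
            Finset.sum_congr rfl fun x₁ _ => e2 x₁
      _ = ∑ z : ↥S, ((X.filter (fun x => z ∈ Zx x)).card) *
            (((X.filter (fun x => z ∈ Zx x)).card) * ((X.filter (fun x => z ∈ Zx x)).card)) := e3
      _ = ∑ z : ↥S, ((X.filter (fun x => z ∈ Zx x)).card)^3 :=
            Finset.sum_congr rfl fun z _ => by ring
    have hps : (∑ z : ↥S, ((X.filter (fun x => z ∈ Zx x)).card:ℝ))^3 / ((N:ℝ))^2
        ≤ ∑ z : ↥S, ((X.filter (fun x => z ∈ Zx x)).card:ℝ)^3 := by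
      have h := pow_sum_div_card_le_sum_pow (s := (Finset.univ : Finset ↥S))
        (f := fun z => ((X.filter (fun x => z ∈ Zx x)).card : ℝ)) (fun i _ => by positivity) 2
      have hcard : (((Finset.univ : Finset ↥S)).card : ℝ) = (N:ℝ) := by
        simp [Finset.card_univ, Fintype.card_coe, hN]
      rw [hcard] at h
      norm_num at h
      exact h
    have h2 : (γ*(N:ℝ)*(X.card:ℝ))^3 = ((σ:ℝ)+ε*N) * (X.card:ℝ)^3 * (N:ℝ)^2 := by
      rw [mul_pow, mul_pow, hγ3]
      field_simp
    have hlow : ((σ:ℝ) + ε*N) * (X.card:ℝ)^3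
        ≤ (∑ z : ↥S, ((X.filter (fun x => z ∈ Zx x)).card:ℝ))^3 / ((N:ℝ))^2 := by
      rw [le_div_iff₀ (by positivity)]
      calc ((σ:ℝ)+ε*N) * (X.card:ℝ)^3 * (N:ℝ)^2 = (γ*(N:ℝ)*(X.card:ℝ))^3 := h2.symm
      _ ≤ (∑ z : ↥S, ((X.filter (fun x => z ∈ Zx x)).card:ℝ))^3 :=
          pow_le_pow_left₀ (by positivity) hcsum 3
    have hfin : (∑ z : ↥S, ((X.filter (fun x => z ∈ Zx x)).card:ℝ)^3)
        = ∑ x₁ ∈ X, ∑ x₂ ∈ X, ∑ x₃ ∈ X, (((Zx x₁ ∩ Zx x₂) ∩ Zx x₃).card : ℝ) := by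
      exact_mod_cast congrArg (Nat.cast : ℕ → ℝ) hcube.symm
    linarith [le_trans hlow hps]
  -- extract a pair
  have hXc0 : (0:ℝ) < (X.card:ℝ) := lt_of_lt_of_le (by positivity) hXc
  have hX1le : (1:ℕ) ≤ X.card := by
    exact_mod_cast hXc0
  have h2ε6' : (6:ℝ) ≤ 2/ε := by rw [le_div_iff₀ hε]; linarith
  have hεX : 2/ε ≤ ε * (X.card:ℝ) := by
    have h2 := mul_le_mul_of_nonneg_left hXc hε.le
    calc 2/ε = ε * (2/ε^2) := by field_simp
    _ ≤ ε * (X.card:ℝ) := h2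
  have h1εX : 1 < ε * (X.card:ℝ) := by linarith
  have hpair : ∃ x₁ ∈ X, ∃ x₂ ∈ X, x₁ ≠ x₂ ∧ ε * (X.card:ℝ) - 1 ≤
      ((X.filter (fun x₃ => σ ≤ ((Zx x₁ ∩ Zx x₂) ∩ Zx x₃).card)).card : ℝ) := by
    have hub : ∀ x₁ ∈ X, ∀ x₂ ∈ X,
        ∑ x₃ ∈ X, (((Zx x₁ ∩ Zx x₂) ∩ Zx x₃).card : ℝ)
          ≤ (σ:ℝ) * (X.card:ℝ) + (N:ℝ) *
            ((X.filter (fun x₃ => σ ≤ ((Zx x₁ ∩ Zx x₂) ∩ Zx x₃).card)).card : ℝ) := by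
      intro x₁ _ x₂ _
      rw [← Finset.sum_filter_add_sum_filter_not X
        (fun x₃ => σ ≤ ((Zx x₁ ∩ Zx x₂) ∩ Zx x₃).card)
        (fun x₃ => (((Zx x₁ ∩ Zx x₂) ∩ Zx x₃).card : ℝ))]
      have hg : ∑ x₃ ∈ X.filter (fun x₃ => σ ≤ ((Zx x₁ ∩ Zx x₂) ∩ Zx x₃).card),
          (((Zx x₁ ∩ Zx x₂) ∩ Zx x₃).card:ℝ)
          ≤ ((X.filter (fun x₃ => σ ≤ ((Zx x₁ ∩ Zx x₂) ∩ Zx x₃).card)).card : ℝ) * (N:ℝ) := by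
        calc ∑ x₃ ∈ X.filter (fun x₃ => σ ≤ ((Zx x₁ ∩ Zx x₂) ∩ Zx x₃).card),
            (((Zx x₁ ∩ Zx x₂) ∩ Zx x₃).card:ℝ)
            ≤ ∑ _x₃ ∈ X.filter (fun x₃ => σ ≤ ((Zx x₁ ∩ Zx x₂) ∩ Zx x₃).card), (N:ℝ) := by
              refine Finset.sum_le_sum fun x₃ _ => ?_
              have h1 : ((Zx x₁ ∩ Zx x₂) ∩ Zx x₃).card ≤ (Zx x₃).card :=
                Finset.card_le_card (Finset.inter_subset_right)
              have h2 := le_trans h1 (hZxN x₃)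
              exact_mod_cast h2
        _ = ((X.filter (fun x₃ => σ ≤ ((Zx x₁ ∩ Zx x₂) ∩ Zx x₃).card)).card : ℝ) * (N:ℝ) := by
              rw [Finset.sum_const, nsmul_eq_mul]
      have hb : ∑ x₃ ∈ X.filter (fun x₃ => ¬ σ ≤ ((Zx x₁ ∩ Zx x₂) ∩ Zx x₃).card),
          (((Zx x₁ ∩ Zx x₂) ∩ Zx x₃).card:ℝ) ≤ (X.card:ℝ) * (σ:ℝ) := by
        calc ∑ x₃ ∈ X.filter (fun x₃ => ¬ σ ≤ ((Zx x₁ ∩ Zx x₂) ∩ Zx x₃).card),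
            (((Zx x₁ ∩ Zx x₂) ∩ Zx x₃).card:ℝ)
            ≤ ∑ _x₃ ∈ X.filter (fun x₃ => ¬ σ ≤ ((Zx x₁ ∩ Zx x₂) ∩ Zx x₃).card), (σ:ℝ) := by
              refine Finset.sum_le_sum fun x₃ hx₃ => ?_
              have h1 := (Finset.mem_filter.mp hx₃).2
              have h2 : ((Zx x₁ ∩ Zx x₂) ∩ Zx x₃).card ≤ σ := (Nat.lt_of_not_le h1).le
              exact_mod_cast h2
        _ = ((X.filter (fun x₃ => ¬ σ ≤ ((Zx x₁ ∩ Zx x₂) ∩ Zx x₃).card)).card : ℝ) * (σ:ℝ) := by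
              rw [Finset.sum_const, nsmul_eq_mul]
        _ ≤ (X.card:ℝ) * (σ:ℝ) := by
              have h3 : (X.filter (fun x₃ => ¬ σ ≤ ((Zx x₁ ∩ Zx x₂) ∩ Zx x₃).card)).card ≤ X.card :=
                Finset.card_filter_le _ _
              exact mul_le_mul_of_nonneg_right (by exact_mod_cast h3) (by positivity)
      linarith
    have hstep : ∑ x₁ ∈ X, ∑ x₂ ∈ X, ∑ x₃ ∈ X, (((Zx x₁ ∩ Zx x₂) ∩ Zx x₃).card : ℝ)
        ≤ (σ:ℝ) * (X.card:ℝ)^3 + (N:ℝ) * ∑ x₁ ∈ X, ∑ x₂ ∈ X,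
          ((X.filter (fun x₃ => σ ≤ ((Zx x₁ ∩ Zx x₂) ∩ Zx x₃).card)).card : ℝ) := by
      calc ∑ x₁ ∈ X, ∑ x₂ ∈ X, ∑ x₃ ∈ X, (((Zx x₁ ∩ Zx x₂) ∩ Zx x₃).card : ℝ)
          ≤ ∑ x₁ ∈ X, ∑ x₂ ∈ X, ((σ:ℝ) * (X.card:ℝ) + (N:ℝ) *
            ((X.filter (fun x₃ => σ ≤ ((Zx x₁ ∩ Zx x₂) ∩ Zx x₃).card)).card : ℝ)) :=
            Finset.sum_le_sum (fun x₁ h₁ => Finset.sum_le_sum (fun x₂ h₂ => hub x₁ h₁ x₂ h₂))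
      _ = ∑ x₁ ∈ X, ((X.card:ℝ) * ((σ:ℝ)*(X.card:ℝ)) + (N:ℝ) * ∑ x₂ ∈ X,
            ((X.filter (fun x₃ => σ ≤ ((Zx x₁ ∩ Zx x₂) ∩ Zx x₃).card)).card : ℝ)) := by
            refine Finset.sum_congr rfl fun x₁ _ => ?_
            rw [Finset.sum_add_distrib, Finset.sum_const, nsmul_eq_mul, ← Finset.mul_sum]
      _ = (σ:ℝ) * (X.card:ℝ)^3 + (N:ℝ) * ∑ x₁ ∈ X, ∑ x₂ ∈ X,
            ((X.filter (fun x₃ => σ ≤ ((Zx x₁ ∩ Zx x₂) ∩ Zx x₃).card)).card : ℝ) := by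
            rw [Finset.sum_add_distrib, Finset.sum_const, nsmul_eq_mul, ← Finset.mul_sum]
            ring
    have htotal : ε * (X.card:ℝ)^3 ≤ ∑ x₁ ∈ X, ∑ x₂ ∈ X,
        ((X.filter (fun x₃ => σ ≤ ((Zx x₁ ∩ Zx x₂) ∩ Zx x₃).card)).card : ℝ) := by
      have h := le_trans hpm hstep
      have h2 : (N:ℝ) * (ε * (X.card:ℝ)^3) ≤ (N:ℝ) * ∑ x₁ ∈ X, ∑ x₂ ∈ X,
          ((X.filter (fun x₃ => σ ≤ ((Zx x₁ ∩ Zx x₂) ∩ Zx x₃).card)).card : ℝ) := by nlinarith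
      exact le_of_mul_le_mul_left h2 hNR
    by_contra hcon
    push_neg at hcon
    have hbound : ∀ x₁ ∈ X, ∑ x₂ ∈ X,
        ((X.filter (fun x₃ => σ ≤ ((Zx x₁ ∩ Zx x₂) ∩ Zx x₃).card)).card:ℝ)
        ≤ (X.card:ℝ) + ((X.card:ℝ) - 1) * (ε*(X.card:ℝ)-1) := by
      intro x₁ hx₁
      rw [← Finset.add_sum_erase X _ hx₁]
      have hdiag : ((X.filter (fun x₃ => σ ≤ ((Zx x₁ ∩ Zx x₁) ∩ Zx x₃).card)).card:ℝ)
          ≤ (X.card:ℝ) := by exact_mod_cast Finset.card_filter_le X _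
      have hrest : ∑ x₂ ∈ X.erase x₁,
          ((X.filter (fun x₃ => σ ≤ ((Zx x₁ ∩ Zx x₂) ∩ Zx x₃).card)).card:ℝ)
          ≤ ((X.card:ℝ)-1)*(ε*(X.card:ℝ)-1) := by
        calc ∑ x₂ ∈ X.erase x₁,
            ((X.filter (fun x₃ => σ ≤ ((Zx x₁ ∩ Zx x₂) ∩ Zx x₃).card)).card:ℝ)
            ≤ ∑ _x₂ ∈ X.erase x₁, (ε*(X.card:ℝ)-1) := by
              refine Finset.sum_le_sum fun x₂ hx₂ => ?_
              exact (hcon x₁ hx₁ x₂ (Finset.mem_of_mem_erase hx₂)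
                (Ne.symm (Finset.ne_of_mem_erase hx₂))).le
        _ = (((X.erase x₁).card):ℝ) * (ε*(X.card:ℝ)-1) := by
              rw [Finset.sum_const, nsmul_eq_mul]
        _ = ((X.card:ℝ)-1)*(ε*(X.card:ℝ)-1) := by
              rw [Finset.card_erase_of_mem hx₁, Nat.cast_sub hX1le, Nat.cast_one]
      linarith
    have htop : ∑ x₁ ∈ X, ∑ x₂ ∈ X,
        ((X.filter (fun x₃ => σ ≤ ((Zx x₁ ∩ Zx x₂) ∩ Zx x₃).card)).card : ℝ)
        ≤ (X.card:ℝ) * ((X.card:ℝ) + ((X.card:ℝ)-1)*(ε*(X.card:ℝ)-1)) := by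
      calc ∑ x₁ ∈ X, ∑ x₂ ∈ X,
          ((X.filter (fun x₃ => σ ≤ ((Zx x₁ ∩ Zx x₂) ∩ Zx x₃).card)).card : ℝ)
          ≤ ∑ _x₁ ∈ X, ((X.card:ℝ) + ((X.card:ℝ)-1)*(ε*(X.card:ℝ)-1)) :=
            Finset.sum_le_sum hbound
      _ = (X.card:ℝ) * ((X.card:ℝ) + ((X.card:ℝ)-1)*(ε*(X.card:ℝ)-1)) := by
            rw [Finset.sum_const, nsmul_eq_mul]
    nlinarith [htotal, htop, mul_pos hXc0 (sub_pos.mpr h1εX)]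
  obtain ⟨x₁, hx₁X, x₂, hx₂X, hne, hcnt⟩ := hpair
  set ℓA : Fin k → F := fun i => (x₁ - x₂)⁻¹ * (ℓof x₁ i - ℓof x₂ i) with hℓAdef
  set ℓB : Fin k → F := fun i => ℓof x₁ i - x₁ * ℓA i with hℓBdef
  set Y : Finset F := X.filter (fun x₃ => σ ≤ ((Zx x₁ ∩ Zx x₂) ∩ Zx x₃).card) with hYdef
  have hYc : ε * (X.card:ℝ) - 1 ≤ (Y.card : ℝ) := hcnt
  have hYc5 : 2/ε - 1 ≤ (Y.card:ℝ) := by linarith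
  have hm2 : (2:ℝ) ≤ (Y.card:ℝ) := by linarith
  -- collinearity
  have hkey : (x₁ - x₂)⁻¹ * (x₁ - x₂) = 1 := inv_mul_cancel₀ (sub_ne_zero.mpr hne)
  have hline : ∀ x₃ ∈ Y, ℓof x₃ = fun i => ℓB i + x₃ * ℓA i := by
    intro x₃ hx₃
    rw [hYdef] at hx₃
    have hx₃X : x₃ ∈ X := (Finset.mem_filter.mp hx₃).1
    have hσW : σ ≤ ((Zx x₁ ∩ Zx x₂) ∩ Zx x₃).card := (Finset.mem_filter.mp hx₃).2
    obtain ⟨T, hTsub, hTcard⟩ := Finset.exists_subset_card_eq hσW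
    have hT'S : T.image (fun z : ↥S => (z : Fin k → F)) ⊆ S := by
      intro y hy
      obtain ⟨z, hz, rfl⟩ := Finset.mem_image.mp hy
      exact z.2
    have hT'card : (T.image (fun z : ↥S => (z : Fin k → F))).card = σ := by
      rw [Finset.card_image_of_injective _ Subtype.val_injective, hTcard]
    have hspan := hrobust _ hT'S hT'card
    have hzero : ∀ v ∈ Submodule.span F
        ((T.image (fun z : ↥S => (z : Fin k → F))) : Set (Fin k → F)),
        ∑ i, (ℓof x₃ i - (ℓB i + x₃ * ℓA i)) * v i = 0 := by
      intro v hv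
      induction hv using Submodule.span_induction with
      | mem y hy =>
        obtain ⟨z, hzT, rfl⟩ : ∃ z ∈ T, (z : Fin k → F) = y := by
          simpa using hy
        have hzW := hTsub hzT
        rw [Finset.mem_inter] at hzW
        obtain ⟨hz12, hz3⟩ := hzW
        rw [Finset.mem_inter] at hz12
        obtain ⟨hz1, hz2⟩ := hz12
        have e1 : (∑ i, ℓof x₁ i * (z : Fin k → F) i) = (B (z:Fin k → F)).eval x₁ := by
          rw [hZxdef] at hz1
          simp only [hZfdef, Finset.mem_filter] at hz1
          exact hz1.2
        have e2 : (∑ i, ℓof x₂ i * (z : Fin k → F) i) = (B (z:Fin k → F)).eval x₂ := by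
          rw [hZxdef] at hz2
          simp only [hZfdef, Finset.mem_filter] at hz2
          exact hz2.2
        have e3 : (∑ i, ℓof x₃ i * (z : Fin k → F) i) = (B (z:Fin k → F)).eval x₃ := by
          rw [hZxdef] at hz3
          simp only [hZfdef, Finset.mem_filter] at hz3
          exact hz3.2
        have heval : ∀ x : F, (B (z:Fin k → F)).eval x
            = (B (z:Fin k → F)).coeff 1 * x + (B (z:Fin k → F)).coeff 0 := by
          intro x
          conv_lhs => rw [Polynomial.eq_X_add_C_of_degree_le_one (hB ((z:Fin k → F)))]
          simp
        rw [heval] at e1 e2 e3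
        have hsplit : ∑ i, (ℓof x₃ i - (ℓB i + x₃ * ℓA i)) * (z : Fin k → F) i
            = (∑ i, ℓof x₃ i * (z : Fin k → F) i) - (∑ i, ℓof x₁ i * (z : Fin k → F) i)
              + (x₁ - x₃) * ((x₁ - x₂)⁻¹ *
                ((∑ i, ℓof x₁ i * (z : Fin k → F) i) - (∑ i, ℓof x₂ i * (z : Fin k → F) i))) := by
          simp only [Finset.mul_sum, ← Finset.sum_sub_distrib, ← Finset.sum_add_distrib]
          refine Finset.sum_congr rfl fun i _ => ?_
          simp only [hℓBdef, hℓAdef]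
          ring
        rw [hsplit, e1, e2, e3]
        linear_combination (x₁ - x₃) * (B (z:Fin k → F)).coeff 1 * hkey
      | zero => simp
      | add a b ha hb iha ihb =>
        have hpt : ∀ i, (ℓof x₃ i - (ℓB i + x₃ * ℓA i)) * (a + b) i
            = (ℓof x₃ i - (ℓB i + x₃ * ℓA i)) * a i
              + (ℓof x₃ i - (ℓB i + x₃ * ℓA i)) * b i := by
          intro i; simp [Pi.add_apply, mul_add]
        rw [Finset.sum_congr rfl fun i _ => hpt i, Finset.sum_add_distrib, iha, ihb, add_zero]
      | smul r a ha iha =>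
        have hpt : ∀ i, (ℓof x₃ i - (ℓB i + x₃ * ℓA i)) * (r • a) i
            = r * ((ℓof x₃ i - (ℓB i + x₃ * ℓA i)) * a i) := by
          intro i; simp [Pi.smul_apply, smul_eq_mul]; ring
        rw [Finset.sum_congr rfl fun i _ => hpt i, ← Finset.mul_sum, iha, mul_zero]
    have hall : ∀ i, ℓof x₃ i - (ℓB i + x₃ * ℓA i) = 0 := by
      intro i
      have h := hzero (Pi.single i 1) (by rw [hspan]; exact Submodule.mem_top)
      rw [Finset.sum_eq_single i] at h
      · simpa using h
      · intro b _ hb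
        rw [Pi.single_eq_of_ne hb, mul_zero]
      · intro hi; exact absurd (Finset.mem_univ i) hi
    funext i
    exact sub_eq_zero.mp (hall i)
  -- final counting
  set CC : Finset (Fin n) := Finset.univ.filter
      (fun j => u j = Matrix.vecMul ℓA G j ∧ ustar j = Matrix.vecMul ℓB G j) with hCCdef
  set DD : Finset (Fin n) := Finset.univ.filter
      (fun j => ¬ (u j = Matrix.vecMul ℓA G j ∧ ustar j = Matrix.vecMul ℓB G j)) with hDDdef
  have hCD : CC.card + DD.card = n := by
    rw [hCCdef, hDDdef, Finset.card_filter_add_card_filter_not]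
    simp
  have hvm : ∀ (v w : Fin k → F) (c : F) (j : Fin n),
      Matrix.vecMul (fun i => v i + c * w i) G j
        = Matrix.vecMul v G j + c * Matrix.vecMul w G j := by
    intro v w c j
    simp [Matrix.vecMul, dotProduct, add_mul, mul_assoc,
      Finset.sum_add_distrib, Finset.mul_sum]
  have hDDb : (DD.card : ℝ) ≤ (δ + ε) * n := by
    have hY1 : (0:ℝ) < (Y.card:ℝ) - 1 := by linarith
    have hDis : ∀ x ∈ Y, ((Finset.univ.filter
        (fun j : Fin n => ustar j + x * u j ≠ Matrix.vecMul (ℓof x) G j)).card : ℝ) ≤ δ * n := by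
      intro x hx
      rw [hYdef] at hx
      have hxX : x ∈ X := (Finset.mem_filter.mp hx).1
      have h := (hℓof x hxX).1
      simp only [relDist, Fintype.card_fin] at h
      rw [div_lt_iff₀ hn0] at h
      exact h.le
    have hcov : ∀ j ∈ DD, ((Y.card:ℝ) - 1) ≤
        ((Y.filter (fun x => ustar j + x * u j ≠ Matrix.vecMul (ℓof x) G j)).card : ℝ) := by
      intro j hj
      have hjD : ¬ (u j = Matrix.vecMul ℓA G j ∧ ustar j = Matrix.vecMul ℓB G j) := by
        rw [hDDdef] at hj
        exact (Finset.mem_filter.mp hj).2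
      have hone : (Y.filter (fun x => ¬ (ustar j + x * u j ≠ Matrix.vecMul (ℓof x) G j))).card ≤ 1 := by
        rw [Finset.card_le_one]
        intro a ha b hb
        by_contra hab
        obtain ⟨haY, ha2⟩ := Finset.mem_filter.mp ha
        obtain ⟨hbY, hb2⟩ := Finset.mem_filter.mp hb
        rw [not_not] at ha2 hb2
        have hva : Matrix.vecMul (ℓof a) G j
            = Matrix.vecMul ℓB G j + a * Matrix.vecMul ℓA G j := by
          rw [hline a haY]; exact hvm ℓB ℓA a j
        have hvb : Matrix.vecMul (ℓof b) G j
            = Matrix.vecMul ℓB G j + b * Matrix.vecMul ℓA G j := by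
          rw [hline b hbY]; exact hvm ℓB ℓA b j
        have heqa : ustar j + a * u j = Matrix.vecMul ℓB G j + a * Matrix.vecMul ℓA G j := by
          rw [← hva]; exact ha2
        have heqb : ustar j + b * u j = Matrix.vecMul ℓB G j + b * Matrix.vecMul ℓA G j := by
          rw [← hvb]; exact hb2
        have hu : u j = Matrix.vecMul ℓA G j := by
          have hsub : (a - b) * (u j - Matrix.vecMul ℓA G j) = 0 := by
            linear_combination heqa - heqb
          rcases mul_eq_zero.mp hsub with h | h
          · exact absurd (sub_eq_zero.mp h) hab
          · exact sub_eq_zero.mp h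
        have hus : ustar j = Matrix.vecMul ℓB G j := by
          have h := heqa
          rw [hu] at h
          exact add_right_cancel h
        exact hjD ⟨hu, hus⟩
      have hsplit2 := Finset.card_filter_add_card_filter_not (s := Y)
        (p := fun x => ustar j + x * u j ≠ Matrix.vecMul (ℓof x) G j)
      have hcY : Y.card ≤ (Y.filter
          (fun x => ustar j + x * u j ≠ Matrix.vecMul (ℓof x) G j)).card + 1 := by
        rw [← hsplit2]
        exact Nat.add_le_add_left hone _
      have hcYR : (Y.card:ℝ) ≤ ((Y.filter
          (fun x => ustar j + x * u j ≠ Matrix.vecMul (ℓof x) G j)).card : ℝ) + 1 := by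
        exact_mod_cast hcY
      linarith
    have hdc : ∑ j ∈ DD, (Y.filter (fun x => ustar j + x * u j ≠ Matrix.vecMul (ℓof x) G j)).card
        = ∑ x ∈ Y, (DD.filter (fun j => ustar j + x * u j ≠ Matrix.vecMul (ℓof x) G j)).card := by
      have h := wdc Y DD (fun x j => ustar j + x * u j ≠ Matrix.vecMul (ℓof x) G j) (fun _ => 1)
      simp only [Finset.sum_const, smul_eq_mul, mul_one] at h
      exact h.symm
    have hup : ∀ x ∈ Y, ((DD.filter
        (fun j => ustar j + x * u j ≠ Matrix.vecMul (ℓof x) G j)).card : ℝ) ≤ δ * n := by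
      intro x hx
      refine le_trans ?_ (hDis x hx)
      have hsub : DD.filter (fun j => ustar j + x * u j ≠ Matrix.vecMul (ℓof x) G j)
          ⊆ Finset.univ.filter (fun j => ustar j + x * u j ≠ Matrix.vecMul (ℓof x) G j) := by
        intro j hj
        exact Finset.mem_filter.mpr ⟨Finset.mem_univ _, (Finset.mem_filter.mp hj).2⟩
      exact_mod_cast Finset.card_le_card hsub
    have hsum1 : (DD.card:ℝ) * ((Y.card:ℝ)-1) ≤ ∑ j ∈ DD, ((Y.filter
        (fun x => ustar j + x * u j ≠ Matrix.vecMul (ℓof x) G j)).card:ℝ) := by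
      calc (DD.card:ℝ) * ((Y.card:ℝ)-1) = ∑ _j ∈ DD, ((Y.card:ℝ)-1) := by
            rw [Finset.sum_const, nsmul_eq_mul]
      _ ≤ _ := Finset.sum_le_sum hcov
    have hsum2 : ∑ j ∈ DD, ((Y.filter
        (fun x => ustar j + x * u j ≠ Matrix.vecMul (ℓof x) G j)).card:ℝ)
        = ∑ x ∈ Y, ((DD.filter
          (fun j => ustar j + x * u j ≠ Matrix.vecMul (ℓof x) G j)).card:ℝ) := by
      exact_mod_cast congrArg (Nat.cast : ℕ → ℝ) hdc
    have hsum3 : ∑ x ∈ Y, ((DD.filter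
        (fun j => ustar j + x * u j ≠ Matrix.vecMul (ℓof x) G j)).card:ℝ)
        ≤ (Y.card:ℝ) * (δ*(n:ℝ)) := by
      calc ∑ x ∈ Y, ((DD.filter
          (fun j => ustar j + x * u j ≠ Matrix.vecMul (ℓof x) G j)).card:ℝ)
          ≤ ∑ _x ∈ Y, δ*(n:ℝ) := Finset.sum_le_sum hup
      _ = (Y.card:ℝ)*(δ*(n:ℝ)) := by rw [Finset.sum_const, nsmul_eq_mul]
    have h2e : ε * (2/ε) = 2 := by field_simp
    have hεm : δ + ε ≤ ε * (Y.card:ℝ) := by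
      have h := mul_le_mul_of_nonneg_left hYc5 hε.le
      rw [mul_sub, mul_one, h2e] at h
      linarith
    have hkey2 : δ * (Y.card:ℝ) ≤ (δ+ε) * ((Y.card:ℝ)-1) := by nlinarith
    have h5 : (DD.card:ℝ) * ((Y.card:ℝ)-1) ≤ ((δ+ε)*(n:ℝ)) * ((Y.card:ℝ)-1) := by
      nlinarith [hsum1, hsum2, hsum3, mul_le_mul_of_nonneg_right hkey2 hn0.le]
    exact le_of_mul_le_mul_right h5 hY1
  refine ⟨ℓA, ℓB, CC, ?_, fun j hj => ((Finset.mem_filter.mp hj).2).1,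
    fun j hj => ((Finset.mem_filter.mp hj).2).2⟩
  have hCC' : (CC.card:ℝ) = (n:ℝ) - DD.card := by
    have : (CC.card:ℝ) + DD.card = n := by exact_mod_cast hCD
    linarith
  rw [hCC']
  linarith
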